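/- arXiv:2302.13103 — 4 statements merged into one kernel-verified Lean document; each statement's English description precedes it below -/
import Mathlib

section
/- Two complex-valued Γ-periodic potentials V, Y : W → ℂ are Floquet isospectral if and only if det(𝒟_V(z) − λI) = det(𝒟_Y(z) − λI) for every z ∈ (ℂ∖{0})^d and every λ ∈ ℂ. -/
open scoped BigOperators

noncomputable section

namespace DPSO

/-- The Floquet matrix `𝒟_V(z)` of the discrete periodic Schrödinger operator, indexed by the
fundamental domain `W = ∏ i, ZMod (q i)`. -/
def floquetMat {d : ℕ} (q : Fin d → ℕ) [∀ i, NeZero (q i)]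
    (V : (∀ i, ZMod (q i)) → ℂ) (z : Fin d → ℂ) :
    Matrix (∀ i, ZMod (q i)) (∀ i, ZMod (q i)) ℂ :=
  fun n n' =>
    (∑ j : Fin d,
      ((if n' = n + Pi.single j 1 then (if (n j).val = q j - 1 then z j else 1) else 0)
        + (if n' = n - Pi.single j 1 then (if (n j).val = 0 then (z j)⁻¹ else 1) else 0)))
    + (if n' = n then V n else 0)

/-- Two `Γ`-periodic potentials are Floquet isospectral if for every real quasimomentum `k`
the Floquet matrices have the same characteristic polynomial. -/
def FloquetIso {d : ℕ} (q : Fin d → ℕ) [∀ i, NeZero (q i)]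
    (V Y : (∀ i, ZMod (q i)) → ℂ) : Prop :=
  ∀ k : Fin d → ℝ,
    (floquetMat q V (fun j => Complex.exp (2 * Real.pi * Complex.I * (k j)))).charpoly
      = (floquetMat q Y (fun j => Complex.exp (2 * Real.pi * Complex.I * (k j)))).charpoly

/-- Two `Γ`-periodic potentials are Fermi isospectral if for some `λ₀` their Fermi surfaces
(inside `(ℂ∖{0})^d`) coincide. -/
def FermiIso {d : ℕ} (q : Fin d → ℕ) [∀ i, NeZero (q i)]
    (V Y : (∀ i, ZMod (q i)) → ℂ) : Prop :=
  ∃ lam : ℂ,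
    {z : Fin d → ℂ | (∀ j, z j ≠ 0) ∧ (floquetMat q V z - lam • 1).det = 0}
      = {z : Fin d → ℂ | (∀ j, z j ≠ 0) ∧ (floquetMat q Y z - lam • 1).det = 0}

/-- The offset (start index) of the `j`-th consecutive block of sizes `ds 0, …, ds (r-1)`. -/
def blockOffset {r : ℕ} (ds : Fin r → ℕ) (j : Fin r) : ℕ :=
  ∑ m ∈ Finset.univ.filter (fun m => m < j), ds m

lemma blockOffset_add_le {r : ℕ} (ds : Fin r → ℕ) (j : Fin r) :
    blockOffset ds j + ds j ≤ ∑ m, ds m := by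
  have hj : j ∉ Finset.univ.filter (fun m : Fin r => m < j) := by simp
  have h : blockOffset ds j + ds j
      = ∑ m ∈ insert j (Finset.univ.filter (fun m : Fin r => m < j)), ds m := by
    rw [Finset.sum_insert hj, Nat.add_comm, blockOffset]
  rw [h]
  exact Finset.sum_le_sum_of_subset (Finset.subset_univ _)

/-- The embedding of the index set of the `j`-th block into `Fin d`. -/
def blockEmb {d r : ℕ} (ds : Fin r → ℕ) (hsum : ∑ m, ds m = d) (j : Fin r)
    (b : Fin (ds j)) : Fin d :=
  ⟨blockOffset ds j + b.val, by
    have h1 := blockOffset_add_le ds j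
    have h2 := b.isLt
    omega⟩

/-- `V` is `(d₁,…,d_r)` separable: it is a sum of functions, the `j`-th of which depends only
on the coordinates in the `j`-th block. -/
def IsSeparable {d r : ℕ} (q : Fin d → ℕ) (ds : Fin r → ℕ) (hsum : ∑ m, ds m = d)
    (V : (∀ i, ZMod (q i)) → ℂ) : Prop :=
  ∃ F : ∀ j : Fin r, ((∀ b : Fin (ds j), ZMod (q (blockEmb ds hsum j b))) → ℂ),
    ∀ n, V n = ∑ j, F j (fun b => n (blockEmb ds hsum j b))

/-- The discrete Fourier transform of `V`. -/
def dft {d : ℕ} (q : Fin d → ℕ) [∀ i, NeZero (q i)] (V : (∀ i, ZMod (q i)) → ℂ)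
    (l : ∀ i, ZMod (q i)) : ℂ :=
  (1 / ∏ i, (q i : ℂ)) * ∑ n : ∀ i, ZMod (q i), V n *
    Complex.exp (-(2 * Real.pi * Complex.I) *
      ∑ j, ((l j).val : ℂ) * ((n j).val : ℂ) / (q j : ℂ))

/-- `ρ^j_m = e^{2πi m/q_j}`. -/
def rho {d : ℕ} (q : Fin d → ℕ) (j : Fin d) (m : ℕ) : ℂ :=
  Complex.exp (2 * Real.pi * Complex.I * (m : ℂ) / (q j : ℂ))

/-- The average `[V]` of a potential. -/
def avg {d : ℕ} (q : Fin d → ℕ) [∀ i, NeZero (q i)] (V : (∀ i, ZMod (q i)) → ℂ) : ℂ :=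
  (1 / ∏ i, (q i : ℂ)) * ∑ n, V n

/-- The diagonal matrix `A(z)`. -/
def diagA {d : ℕ} (q : Fin d → ℕ) [∀ i, NeZero (q i)] (z : Fin d → ℂ) :
    Matrix (∀ i, ZMod (q i)) (∀ i, ZMod (q i)) ℂ :=
  Matrix.diagonal (fun n => ∑ j, (rho q j ((n j).val) * z j + (rho q j ((n j).val) * z j)⁻¹))

/-- The matrix `B_V` with entries `V̂(n - n')`. -/
def matB {d : ℕ} (q : Fin d → ℕ) [∀ i, NeZero (q i)] (V : (∀ i, ZMod (q i)) → ℂ) :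
    Matrix (∀ i, ZMod (q i)) (∀ i, ZMod (q i)) ℂ :=
  fun n n' => dft q V (n - n')


/-! ### Laurent-polynomial functions -/

def IsLaur (f : ℂ → ℂ) : Prop :=
  ∃ (N : ℕ) (P : Polynomial ℂ), ∀ x : ℂ, x ≠ 0 → x ^ N * f x = P.eval x

lemma IsLaur.const (c : ℂ) : IsLaur (fun _ => c) := ⟨0, Polynomial.C c, by simp⟩

lemma IsLaur.id' : IsLaur (fun x => x) := ⟨0, Polynomial.X, by simp⟩

lemma IsLaur.inv : IsLaur (fun x => x⁻¹) :=
  ⟨1, 1, fun x hx => by simp [mul_inv_cancel₀ hx]⟩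

lemma IsLaur.add {f g : ℂ → ℂ} (hf : IsLaur f) (hg : IsLaur g) :
    IsLaur (fun x => f x + g x) := by
  obtain ⟨N, P, hP⟩ := hf; obtain ⟨M, Q, hQ⟩ := hg
  refine ⟨N + M, Polynomial.X ^ M * P + Polynomial.X ^ N * Q, fun x hx => ?_⟩
  have h1 := hP x hx; have h2 := hQ x hx
  simp only [Polynomial.eval_add, Polynomial.eval_mul, Polynomial.eval_pow,
    Polynomial.eval_X, ← h1, ← h2]
  ring

lemma IsLaur.mul {f g : ℂ → ℂ} (hf : IsLaur f) (hg : IsLaur g) :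
    IsLaur (fun x => f x * g x) := by
  obtain ⟨N, P, hP⟩ := hf; obtain ⟨M, Q, hQ⟩ := hg
  refine ⟨N + M, P * Q, fun x hx => ?_⟩
  have h1 := hP x hx; have h2 := hQ x hx
  simp only [Polynomial.eval_mul, ← h1, ← h2]
  ring

lemma IsLaur.neg {f : ℂ → ℂ} (hf : IsLaur f) : IsLaur (fun x => -f x) := by
  obtain ⟨N, P, hP⟩ := hf
  exact ⟨N, -P, fun x hx => by simp [← hP x hx]⟩

lemma IsLaur.sub {f g : ℂ → ℂ} (hf : IsLaur f) (hg : IsLaur g) :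
    IsLaur (fun x => f x - g x) := by
  simpa [sub_eq_add_neg] using hf.add hg.neg

lemma IsLaur.ite (p : Prop) [Decidable p] {f g : ℂ → ℂ} (hf : IsLaur f) (hg : IsLaur g) :
    IsLaur (fun x => if p then f x else g x) := by
  split <;> assumption

lemma IsLaur.sum {ι : Type*} (s : Finset ι) (f : ι → ℂ → ℂ)
    (h : ∀ i ∈ s, IsLaur (f i)) : IsLaur (fun x => ∑ i ∈ s, f i x) := by
  classical
  induction s using Finset.induction with
  | empty => simpa using IsLaur.const 0
  | insert a s' hi ih =>
    simp only [Finset.sum_insert hi]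
    exact (h a (Finset.mem_insert_self _ _)).add
      (ih fun i hi' => h i (Finset.mem_insert_of_mem hi'))

lemma IsLaur.prod {ι : Type*} (s : Finset ι) (f : ι → ℂ → ℂ)
    (h : ∀ i ∈ s, IsLaur (f i)) : IsLaur (fun x => ∏ i ∈ s, f i x) := by
  classical
  induction s using Finset.induction with
  | empty => simpa using IsLaur.const 1
  | insert a s' hi ih =>
    simp only [Finset.prod_insert hi]
    exact (h a (Finset.mem_insert_self _ _)).mul
      (ih fun i hi' => h i (Finset.mem_insert_of_mem hi'))

lemma IsLaur.det {ι : Type*} [Fintype ι] [DecidableEq ι] {M : ℂ → Matrix ι ι ℂ}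
    (h : ∀ n n', IsLaur (fun x => M x n n')) : IsLaur (fun x => (M x).det) := by
  have he : (fun x => (M x).det)
      = fun x => ∑ σ : Equiv.Perm ι, ((Equiv.Perm.sign σ : ℤ) : ℂ) * ∏ i, M x (σ i) i := by
    funext x
    rw [Matrix.det_apply']
  rw [he]
  exact IsLaur.sum _ _ fun σ _ => (IsLaur.const _).mul (IsLaur.prod _ _ fun i _ => h _ _)

lemma isLaur_zero {f : ℂ → ℂ} (hf : IsLaur f)
    (h : ∀ t : ℝ, f (Complex.exp (2 * Real.pi * Complex.I * t)) = 0) :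
    ∀ x : ℂ, x ≠ 0 → f x = 0 := by
  obtain ⟨N, P, hP⟩ := hf
  have hP0 : P = 0 := by
    apply Polynomial.eq_zero_of_infinite_isRoot
    have h2 : (2 * (Real.pi : ℂ) * Complex.I) ≠ 0 :=
      mul_ne_zero (mul_ne_zero two_ne_zero (by exact_mod_cast Real.pi_ne_zero)) Complex.I_ne_zero
    have hinf : ((fun t : ℝ => Complex.exp (2 * Real.pi * Complex.I * t)) ''
        Set.Ioo 0 (1/2)).Infinite := by
      apply Set.Infinite.image
      · intro a ha b hb hab
        rw [Complex.exp_eq_exp_iff_exists_int] at hab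
        obtain ⟨m, hm⟩ := hab
        have hkey : (2 * (Real.pi : ℂ) * Complex.I) * (a : ℂ)
            = (2 * (Real.pi : ℂ) * Complex.I) * ((b : ℂ) + (m : ℂ)) := by
          linear_combination hm
        have hcast : (a : ℂ) = ((b + m : ℝ) : ℂ) := by
          push_cast
          exact mul_left_cancel₀ h2 hkey
        have hab2 : a = b + m := Complex.ofReal_injective hcast
        obtain ⟨ha1, ha2⟩ := ha
        obtain ⟨hb1, hb2⟩ := hb
        have hm1 : (-1 : ℝ) < (m : ℤ) := by push_cast; linarith
        have hm2 : ((m : ℤ) : ℝ) < 1 := by push_cast; linarith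
        have : m = 0 := by
          have l1 : (-1 : ℤ) < m := by exact_mod_cast hm1
          have l2 : m < 1 := by exact_mod_cast hm2
          omega
        rw [this] at hab2
        simpa using hab2
      · exact Set.Ioo_infinite (by norm_num)
    apply hinf.mono
    rintro x ⟨t, _, rfl⟩
    have hx : Complex.exp (2 * Real.pi * Complex.I * t) ≠ 0 := Complex.exp_ne_zero _
    have := hP _ hx
    simp only [Set.mem_setOf_eq, Polynomial.IsRoot, ← this, h t, mul_zero]
  intro x hx
  have := hP x hx
  rw [hP0] at this
  simp only [Polynomial.eval_zero, mul_eq_zero, pow_eq_zero_iff', ne_eq] at this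
  rcases this with ⟨h1, _⟩ | h1
  · exact absurd h1 hx
  · exact h1

lemma eval_charpoly' {ι : Type*} [Fintype ι] [DecidableEq ι] (M : Matrix ι ι ℂ) (x : ℂ) :
    M.charpoly.eval x = (x • (1 : Matrix ι ι ℂ) - M).det := by
  rw [Matrix.charpoly, ← Polynomial.coe_evalRingHom, RingHom.map_det]
  congr 1
  ext i j
  by_cases h : i = j <;>
    simp [Matrix.charmatrix_apply, Matrix.one_apply, h, Matrix.diagonal_apply,
      Matrix.smul_apply, Matrix.sub_apply]

lemma charpoly_eq_iff {ι : Type*} [Fintype ι] [DecidableEq ι] (M M' : Matrix ι ι ℂ) :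
    M.charpoly = M'.charpoly ↔ ∀ lam : ℂ, (M - lam • 1).det = (M' - lam • 1).det := by
  have key : ∀ (A : Matrix ι ι ℂ) (lam : ℂ),
      (A - lam • 1).det = (-1) ^ Fintype.card ι * A.charpoly.eval lam := by
    intro A lam
    rw [eval_charpoly', show A - lam • 1 = -(lam • (1 : Matrix ι ι ℂ) - A) from (neg_sub _ _).symm,
      Matrix.det_neg]
  constructor
  · intro h lam
    rw [key, key, h]
  · intro h
    apply Polynomial.funext
    intro lam
    have := h lam
    rw [key, key] at this
    exact mul_left_cancel₀ (pow_ne_zero _ (neg_ne_zero.mpr one_ne_zero)) this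

lemma isLaur_entry {d : ℕ} (q : Fin d → ℕ) [∀ i, NeZero (q i)]
    (V : (∀ i, ZMod (q i)) → ℂ) (lam : ℂ) (z : Fin d → ℂ) (i : Fin d)
    (n n' : ∀ i, ZMod (q i)) :
    IsLaur (fun x => (floquetMat q V (Function.update z i x)
      - lam • (1 : Matrix (∀ i, ZMod (q i)) (∀ i, ZMod (q i)) ℂ)) n n') := by
  have hu : ∀ j, IsLaur (fun x => Function.update z i x j) := by
    intro j
    rcases eq_or_ne j i with rfl | h
    · simpa using IsLaur.id'
    · simpa [Function.update_of_ne h] using IsLaur.const (z j)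
  have hui : ∀ j, IsLaur (fun x => (Function.update z i x j)⁻¹) := by
    intro j
    rcases eq_or_ne j i with rfl | h
    · simpa using IsLaur.inv
    · simpa [Function.update_of_ne h] using IsLaur.const (z j)⁻¹
  simp only [Matrix.sub_apply, Matrix.smul_apply, Matrix.one_apply, smul_eq_mul, floquetMat]
  apply IsLaur.sub
  · apply IsLaur.add
    · apply IsLaur.sum
      intro j _
      apply IsLaur.add
      · exact IsLaur.ite _ (IsLaur.ite _ (hu j) (IsLaur.const 1)) (IsLaur.const 0)
      · exact IsLaur.ite _ (IsLaur.ite _ (hui j) (IsLaur.const 1)) (IsLaur.const 0)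
    · exact IsLaur.const _
  · exact IsLaur.const _

lemma vanish_extend {d : ℕ} (g : (Fin d → ℂ) → ℂ)
    (hlaur : ∀ (z : Fin d → ℂ) (i : Fin d), IsLaur (fun x => g (Function.update z i x)))
    (hcirc : ∀ k : Fin d → ℝ,
      g (fun j => Complex.exp (2 * Real.pi * Complex.I * (k j))) = 0) :
    ∀ z : Fin d → ℂ, (∀ j, z j ≠ 0) → g z = 0 := by
  suffices h : ∀ S : Finset (Fin d), ∀ z : Fin d → ℂ,
      (∀ j ∈ S, z j ≠ 0) →
      (∀ j ∉ S, ∃ t : ℝ, z j = Complex.exp (2 * Real.pi * Complex.I * t)) → g z = 0 by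
    intro z hz
    exact h Finset.univ z (fun j _ => hz j) (fun j hj => absurd (Finset.mem_univ j) hj)
  intro S
  induction S using Finset.induction with
  | empty =>
    intro z _ hz
    choose k hk using fun j => hz j (by simp)
    have hze : z = fun j => Complex.exp (2 * Real.pi * Complex.I * (k j)) := funext hk
    rw [hze]
    exact hcirc k
  | insert i S' hi IH =>
    intro z hz hz'
    have key : ∀ x : ℂ, x ≠ 0 → g (Function.update z i x) = 0 := by
      apply isLaur_zero (hlaur z i)
      intro t
      apply IH
      · intro j hj
        have hne : j ≠ i := by rintro rfl; exact hi hj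
        rw [Function.update_of_ne hne]
        exact hz j (Finset.mem_insert_of_mem hj)
      · intro j hj
        rcases eq_or_ne j i with rfl | hne
        · exact ⟨t, by simp⟩
        · rw [Function.update_of_ne hne]
          exact hz' j (by simp [hne, hj])
    have := key (z i) (hz i (Finset.mem_insert_self i S'))
    rwa [Function.update_eq_self] at this

/-- `V` and `Y` are Floquet isospectral iff
`det(𝒟_V(z) − λI) = det(𝒟_Y(z) − λI)` for all `z ∈ (ℂ∖{0})^d` and all `λ ∈ ℂ`. -/
theorem stmt3 {d : ℕ} (hd : 1 ≤ d) (q : Fin d → ℕ) [∀ i, NeZero (q i)]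
    (V Y : (∀ i, ZMod (q i)) → ℂ) :
    FloquetIso q V Y ↔
      ∀ z : Fin d → ℂ, (∀ j, z j ≠ 0) → ∀ lam : ℂ,
        (floquetMat q V z - lam • 1).det = (floquetMat q Y z - lam • 1).det := by
  constructor
  · intro h z hz lam
    have hg := vanish_extend
      (g := fun z => (floquetMat q V z - lam • 1).det - (floquetMat q Y z - lam • 1).det)
      (fun z' i => (IsLaur.det (fun n n' => isLaur_entry q V lam z' i n n')).sub
        (IsLaur.det (fun n n' => isLaur_entry q Y lam z' i n n')))
      (fun k => sub_eq_zero_of_eq ((charpoly_eq_iff _ _).mp (h k) lam))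
      z hz
    exact sub_eq_zero.mp hg
  · intro h k
    exact (charpoly_eq_iff _ _).mpr fun lam => h _ (fun j => Complex.exp_ne_zero _) lam


end DPSO
end
end

section
/- For every Γ-periodic potential V : W → ℂ, every z = (z₁,…,z_d) ∈ (ℂ∖{0})^d and every λ ∈ ℂ, one has det(𝒟_V(z₁^{q₁}, z₂^{q₂}, …, z_d^{q_d}) − λI) = det(A(z) + B_V − λI). -/
open scoped BigOperators

noncomputable section

namespace DPSO

/-! ### Auxiliary machinery for `stmt5` -/

/-- `e^{2πi t/Q}` for an integer `t`. -/
def Ew (Q : ℕ) (t : ℤ) : ℂ := Complex.exp (2 * Real.pi * Complex.I * t / Q)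

lemma Ew_zero (Q : ℕ) : Ew Q 0 = 1 := by simp [Ew]

lemma Ew_add (Q : ℕ) (a b : ℤ) : Ew Q (a + b) = Ew Q a * Ew Q b := by
  rw [Ew, Ew, Ew, ← Complex.exp_add]
  congr 1
  push_cast
  ring

lemma Ew_ne_zero (Q : ℕ) (t : ℤ) : Ew Q t ≠ 0 := Complex.exp_ne_zero _

lemma Ew_neg (Q : ℕ) (a : ℤ) : Ew Q (-a) = (Ew Q a)⁻¹ := by
  rw [Ew, Ew, ← Complex.exp_neg]
  congr 1
  push_cast
  ring

lemma Ew_nat_mul (Q : ℕ) (k : ℕ) (a : ℤ) : Ew Q (k * a) = Ew Q a ^ k := by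
  rw [Ew, Ew, ← Complex.exp_nat_mul]
  congr 1
  push_cast
  ring

lemma Ew_int_mul_self (Q : ℕ) [NeZero Q] (t : ℤ) : Ew Q (Q * t) = 1 := by
  have hQ : (Q : ℂ) ≠ 0 := by exact_mod_cast (NeZero.ne Q)
  rw [Ew, show 2 * (Real.pi : ℂ) * Complex.I * ((Q : ℤ) * t : ℤ) / Q
      = (t : ℂ) * (2 * Real.pi * Complex.I) by push_cast; field_simp]
  exact Complex.exp_int_mul_two_pi_mul_I t

lemma Ew_mod (Q : ℕ) [NeZero Q] (a b : ℤ) (h : (a : ZMod Q) = (b : ZMod Q)) :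
    Ew Q a = Ew Q b := by
  have : ((a - b : ℤ) : ZMod Q) = 0 := by push_cast [h]; ring
  obtain ⟨t, ht⟩ := (ZMod.intCast_zmod_eq_zero_iff_dvd _ _).mp this
  have : a = b + Q * t := by omega
  rw [this, Ew_add, Ew_int_mul_self, mul_one]

lemma sum_zmod_val {Q : ℕ} [NeZero Q] (f : ℕ → ℂ) :
    ∑ m : ZMod Q, f m.val = ∑ i ∈ Finset.range Q, f i := by
  refine Finset.sum_nbij' (fun m => m.val) (fun i => (i : ZMod Q)) ?_ ?_ ?_ ?_ ?_
  · intro m _; exact Finset.mem_range.mpr (ZMod.val_lt m)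
  · intro i _; exact Finset.mem_univ _
  · intro m _; exact ZMod.natCast_rightInverse m
  · intro i hi; exact ZMod.val_cast_of_lt (Finset.mem_range.mp hi)
  · intro m _; rfl

lemma Ew_sum {Q : ℕ} [NeZero Q] (c : ℤ) :
    ∑ m : ZMod Q, Ew Q (c * m.val) = if (c : ZMod Q) = 0 then (Q : ℂ) else 0 := by
  have hpow : ∀ m : ZMod Q, Ew Q (c * m.val) = Ew Q c ^ m.val := by
    intro m
    rw [mul_comm, Ew_nat_mul]
  simp only [hpow]
  rw [sum_zmod_val (fun i => Ew Q c ^ i)]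
  by_cases hc : (c : ZMod Q) = 0
  · obtain ⟨t, ht⟩ := (ZMod.intCast_zmod_eq_zero_iff_dvd _ _).mp hc
    rw [ht, Ew_int_mul_self]
    simp [hc]
  · have hne : Ew Q c ≠ 1 := by
      intro h
      obtain ⟨n, hn⟩ := Complex.exp_eq_one_iff.mp h
      have hQ : (Q : ℂ) ≠ 0 := by exact_mod_cast (NeZero.ne Q)
      have h2 : (2 : ℂ) * Real.pi * Complex.I ≠ 0 := by
        simp [Real.pi_ne_zero, Complex.I_ne_zero]
      rw [div_eq_iff hQ] at hn
      have hcn : (c : ℂ) = n * Q := by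
        apply mul_left_cancel₀ h2
        linear_combination hn
      have : c = n * Q := by exact_mod_cast hcn
      exact hc (by rw [this]; push_cast; simp)
    rw [geom_sum_eq hne]
    have : Ew Q c ^ Q = 1 := by
      rw [← Ew_nat_mul, Ew_int_mul_self]
    rw [this, if_neg hc]
    simp

lemma val_add_one {Q : ℕ} [NeZero Q] (m : ZMod Q) :
    (m + 1).val = if m.val = Q - 1 then 0 else m.val + 1 := by
  rcases Nat.lt_or_ge Q 2 with hQ | hQ
  · interval_cases Q
    · exact absurd rfl (NeZero.ne 0)
    · have h0 : ∀ a : ZMod 1, a.val = 0 := by decide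
      simp [h0]
  · have : Fact (1 < Q) := ⟨hQ⟩
    rw [ZMod.val_add, ZMod.val_one]
    have hm := ZMod.val_lt m
    by_cases h : m.val = Q - 1
    · rw [if_pos h, h, Nat.sub_add_cancel (by omega), Nat.mod_self]
    · rw [if_neg h, Nat.mod_eq_of_lt (by omega)]

lemma val_sub_one {Q : ℕ} [NeZero Q] (m : ZMod Q) :
    (m - 1).val = if m.val = 0 then Q - 1 else m.val - 1 := by
  have h := val_add_one (m - 1)
  rw [sub_add_cancel] at h
  have hm := ZMod.val_lt m
  have hm1 := ZMod.val_lt (m - 1)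
  by_cases h1 : (m - 1).val = Q - 1
  · rw [if_pos h1] at h
    rw [h1, if_pos h]
  · rw [if_neg h1] at h
    rw [if_neg (by omega)]
    omega

/-- The conjugating matrix `U(n,l) = ∏_j (z_j ρ^j_{l_j})^{n_j}`. -/
def Umat {d : ℕ} (q : Fin d → ℕ) [∀ i, NeZero (q i)] (z : Fin d → ℂ) :
    Matrix (∀ i, ZMod (q i)) (∀ i, ZMod (q i)) ℂ :=
  fun n l => ∏ j, (z j ^ (n j).val * Ew (q j) (((n j).val : ℤ) * ((l j).val : ℤ)))

section Aux
variable {d : ℕ} (q : Fin d → ℕ) [∀ i, NeZero (q i)]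

lemma Umat_factor_eq (z : Fin d → ℂ)
    (n n' l : ∀ i, ZMod (q i)) (j : Fin d) (hk : ∀ k, k ≠ j → n' k = n k)
    (c w : ℂ)
    (hj : c * (z j ^ (n' j).val * Ew (q j) (((n' j).val : ℤ) * ((l j).val : ℤ)))
        = w * (z j ^ (n j).val * Ew (q j) (((n j).val : ℤ) * ((l j).val : ℤ)))) :
    c * Umat q z n' l = w * Umat q z n l := by
  unfold Umat
  rw [Finset.prod_eq_mul_prod_sdiff_singleton_of_mem (Finset.mem_univ j)
      (fun k => z k ^ (n' k).val * Ew (q k) (((n' k).val : ℤ) * ((l k).val : ℤ))),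
    Finset.prod_eq_mul_prod_sdiff_singleton_of_mem (Finset.mem_univ j)
      (fun k => z k ^ (n k).val * Ew (q k) (((n k).val : ℤ) * ((l k).val : ℤ)))]
  have hrest : ∏ k ∈ Finset.univ \ {j}, (z k ^ (n' k).val * Ew (q k) (((n' k).val : ℤ) * ((l k).val : ℤ)))
      = ∏ k ∈ Finset.univ \ {j}, (z k ^ (n k).val * Ew (q k) (((n k).val : ℤ) * ((l k).val : ℤ))) := by
    refine Finset.prod_congr rfl fun k hk' => ?_
    rw [hk k (by simpa using (Finset.mem_sdiff.mp hk').2)]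
  rw [hrest]
  linear_combination hj * ∏ k ∈ Finset.univ \ {j}, (z k ^ (n k).val * Ew (q k) (((n k).val : ℤ) * ((l k).val : ℤ)))

lemma Umat_shift_up (z : Fin d → ℂ)
    (n l : ∀ i, ZMod (q i)) (j : Fin d) :
    (if (n j).val = q j - 1 then z j ^ q j else 1) * Umat q z (n + Pi.single j 1) l
      = (Ew (q j) ((l j).val) * z j) * Umat q z n l := by
  apply Umat_factor_eq q z n _ l j
  · intro k hk
    simp [Pi.single_eq_of_ne hk]
  · have hnj : ((n + Pi.single j 1 : ∀ i, ZMod (q i)) j) = n j + 1 := by simp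
    rw [hnj, val_add_one]
    set a : ℤ := ((l j).val : ℤ)
    set v : ℕ := (n j).val
    have hv : v < q j := ZMod.val_lt (n j)
    by_cases h : v = q j - 1
    · rw [if_pos h, if_pos h]
      simp only [pow_zero, Nat.cast_zero, zero_mul, Ew_zero, mul_one]
      have h1 : ((v : ℤ)) * a = (q j : ℤ) * a + (-a) := by
        have : (v : ℤ) = (q j : ℤ) - 1 := by omega
        rw [this]; ring
      rw [h1, Ew_add, Ew_int_mul_self, one_mul, Ew_neg]
      have hq1 : z j ^ q j = z j ^ v * z j := by
        rw [← pow_succ]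
        congr 1
        omega
      rw [hq1]
      have hEa := Ew_ne_zero (q j) a
      field_simp
    · rw [if_neg h, if_neg h, one_mul]
      have h1 : (((v + 1 : ℕ) : ℤ)) * a = a + (v : ℤ) * a := by push_cast; ring
      rw [h1, Ew_add, pow_succ]
      ring

lemma Umat_shift_down (z : Fin d → ℂ)
    (hz : ∀ j, z j ≠ 0) (n l : ∀ i, ZMod (q i)) (j : Fin d) :
    (if (n j).val = 0 then (z j ^ q j)⁻¹ else 1) * Umat q z (n - Pi.single j 1) l
      = (Ew (q j) ((l j).val) * z j)⁻¹ * Umat q z n l := by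
  apply Umat_factor_eq q z n _ l j
  · intro k hk
    simp [Pi.single_eq_of_ne hk]
  · have hnj : ((n - Pi.single j 1 : ∀ i, ZMod (q i)) j) = n j - 1 := by simp
    rw [hnj, val_sub_one]
    set a : ℤ := ((l j).val : ℤ)
    set v : ℕ := (n j).val
    have hv : v < q j := ZMod.val_lt (n j)
    have hq0 : q j ≠ 0 := NeZero.ne (q j)
    rw [mul_inv, ← Ew_neg]
    by_cases h : v = 0
    · rw [if_pos h, if_pos h, h]
      simp only [pow_zero, Nat.cast_zero, zero_mul, Ew_zero, mul_one]
      have h1 : (((q j - 1 : ℕ) : ℤ)) * a = (q j : ℤ) * a + (-a) := by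
        have : ((q j - 1 : ℕ) : ℤ) = (q j : ℤ) - 1 := by omega
        rw [this]; ring
      rw [h1, Ew_add, Ew_int_mul_self, one_mul, Ew_neg]
      have hq1 : z j ^ q j = z j ^ (q j - 1) * z j := by
        rw [← pow_succ]
        congr 1
        omega
      rw [hq1]
      have := hz j
      have := Ew_ne_zero (q j) a
      field_simp
    · rw [if_neg h, if_neg h, one_mul]
      have h1 : (v : ℤ) * a = a + ((v - 1 : ℕ) : ℤ) * a := by
        have : ((v - 1 : ℕ) : ℤ) = (v : ℤ) - 1 := by omega
        rw [this]; ring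
      rw [h1, Ew_add]
      have hzj := hz j
      have hvpow : z j ^ v = z j * z j ^ (v - 1) := by
        rw [← pow_succ']
        congr 1
        omega
      rw [hvpow]
      have hEa := Ew_ne_zero (q j) a
      rw [Ew_neg]
      field_simp

lemma sub_val_cast_eq_zero_iff (Q : ℕ) [NeZero Q] (a b : ZMod Q) :
    ((((a.val : ℤ) - (b.val : ℤ)) : ℤ) : ZMod Q) = 0 ↔ a = b := by
  push_cast
  rw [ZMod.natCast_rightInverse a, ZMod.natCast_rightInverse b, sub_eq_zero]

lemma sum_prod_Ew (c : Fin d → ℤ) :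
    ∑ k : (∀ i, ZMod (q i)), ∏ j, Ew (q j) (c j * ((k j).val : ℤ))
      = ∏ j, (if ((c j : ZMod (q j))) = 0 then ((q j : ℕ) : ℂ) else 0) := by
  have h1 : ∀ j : Fin d, (if ((c j : ZMod (q j))) = 0 then ((q j : ℕ) : ℂ) else 0)
      = ∑ m : ZMod (q j), Ew (q j) (c j * (m.val : ℤ)) := fun j => (Ew_sum (c j)).symm
  simp only [h1]
  rw [Finset.prod_univ_sum]
  rw [Fintype.piFinset_univ]

lemma prod_Q_ne_zero : (∏ j, ((q j : ℕ) : ℂ)) ≠ 0 := by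
  apply Finset.prod_ne_zero_iff.mpr
  intro j _
  exact_mod_cast NeZero.ne (q j)

lemma prod_ite_diag (n m : ∀ i, ZMod (q i)) :
    ∏ j, (if (((((n j).val : ℤ) - ((m j).val : ℤ)) : ℤ) : ZMod (q j)) = 0 then ((q j : ℕ) : ℂ) else 0)
      = if n = m then ∏ j, ((q j : ℕ) : ℂ) else 0 := by
  by_cases h : n = m
  · rw [if_pos h]
    subst h
    refine Finset.prod_congr rfl fun j _ => ?_
    rw [if_pos ((sub_val_cast_eq_zero_iff (q j) (n j) (n j)).mpr rfl)]
  · rw [if_neg h]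
    have : ∃ j, n j ≠ m j := by
      by_contra hc
      push_neg at hc
      exact h (funext hc)
    obtain ⟨j, hj⟩ := this
    apply Finset.prod_eq_zero (Finset.mem_univ j)
    rw [if_neg]
    rw [sub_val_cast_eq_zero_iff]
    exact hj

lemma dft_expand (V : (∀ i, ZMod (q i)) → ℂ) (l : ∀ i, ZMod (q i)) :
    dft q V l = (1 / ∏ i, ((q i : ℕ) : ℂ)) *
      ∑ n : ∀ i, ZMod (q i), V n * ∏ j, Ew (q j) (-(((l j).val : ℤ) * ((n j).val : ℤ))) := by
  unfold dft
  congr 1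
  refine Finset.sum_congr rfl fun n _ => ?_
  congr 1
  rw [show -(2 * (Real.pi:ℂ) * Complex.I) * ∑ j, ((l j).val : ℂ) * ((n j).val : ℂ) / (q j : ℂ)
      = ∑ j, (2 * (Real.pi:ℂ) * Complex.I * ((-(((l j).val : ℤ) * ((n j).val : ℤ)) : ℤ) : ℂ) / (q j : ℂ)) by
    rw [Finset.mul_sum]
    refine Finset.sum_congr rfl fun j _ => ?_
    push_cast
    ring]
  rw [Complex.exp_sum]
  exact Finset.prod_congr rfl fun j _ => rfl

lemma fourier_inversion (V : (∀ i, ZMod (q i)) → ℂ) (n : ∀ i, ZMod (q i)) :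
    ∑ k : ∀ i, ZMod (q i), dft q V k * ∏ j, Ew (q j) (((n j).val : ℤ) * ((k j).val : ℤ))
      = V n := by
  have key : ∀ k : ∀ i, ZMod (q i), dft q V k * ∏ j, Ew (q j) (((n j).val : ℤ) * ((k j).val : ℤ))
      = (1 / ∏ i, ((q i : ℕ) : ℂ)) * ∑ m : ∀ i, ZMod (q i), V m *
          ∏ j, Ew (q j) ((((n j).val : ℤ) - ((m j).val : ℤ)) * ((k j).val : ℤ)) := by
    intro k
    rw [dft_expand, mul_comm _ (∏ j, Ew (q j) (((n j).val : ℤ) * ((k j).val : ℤ))), ← mul_assoc,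
      mul_comm _ (1 / ∏ i, ((q i : ℕ) : ℂ)), mul_assoc, Finset.mul_sum]
    congr 1
    refine Finset.sum_congr rfl fun m _ => ?_
    rw [← mul_assoc, mul_comm _ (V m), mul_assoc, ← Finset.prod_mul_distrib]
    congr 1
    refine Finset.prod_congr rfl fun j _ => ?_
    rw [← Ew_add]
    congr 1
    ring
  simp only [key]
  rw [← Finset.mul_sum, Finset.sum_comm]
  have inner : ∀ m : ∀ i, ZMod (q i),
      ∑ k : ∀ i, ZMod (q i), V m * ∏ j, Ew (q j) ((((n j).val : ℤ) - ((m j).val : ℤ)) * ((k j).val : ℤ))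
        = V m * if n = m then ∏ j, ((q j : ℕ) : ℂ) else 0 := by
    intro m
    rw [← Finset.mul_sum, sum_prod_Ew, prod_ite_diag]
  simp only [inner, mul_ite, mul_zero]
  rw [Finset.sum_ite_eq _ n (fun m => V m * ∏ j, ((q j : ℕ) : ℂ))]
  rw [if_pos (Finset.mem_univ n)]
  have hQ := prod_Q_ne_zero q
  field_simp

end Aux

section Main
variable {d : ℕ} (q : Fin d → ℕ) [∀ i, NeZero (q i)]

/-- The DFT part of `Umat`. -/
def Fmat : Matrix (∀ i, ZMod (q i)) (∀ i, ZMod (q i)) ℂ :=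
  fun n l => ∏ j, Ew (q j) (((n j).val : ℤ) * ((l j).val : ℤ))

lemma Umat_eq_mul (z : Fin d → ℂ) (n l : ∀ i, ZMod (q i)) :
    Umat q z n l = (∏ j, z j ^ (n j).val) * Fmat q n l := by
  rw [Umat, Fmat, Finset.prod_mul_distrib]

lemma Fmat_add_right (n k l : ∀ i, ZMod (q i)) :
    Fmat q n (k + l) = Fmat q n k * Fmat q n l := by
  rw [Fmat, Fmat, Fmat, ← Finset.prod_mul_distrib]
  refine Finset.prod_congr rfl fun j _ => ?_
  rw [← Ew_add]
  apply Ew_mod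
  push_cast
  rw [ZMod.natCast_rightInverse ((k + l) j), ZMod.natCast_rightInverse (k j),
    ZMod.natCast_rightInverse (l j)]
  rw [show (k + l) j = k j + l j from rfl]
  ring

lemma Umat_mulV (V : (∀ i, ZMod (q i)) → ℂ) (z : Fin d → ℂ) (n l : ∀ i, ZMod (q i)) :
    V n * Umat q z n l = ∑ l' : ∀ i, ZMod (q i), Umat q z n l' * dft q V (l' - l) := by
  have step1 : ∑ l' : ∀ i, ZMod (q i), Umat q z n l' * dft q V (l' - l)
      = ∑ k : ∀ i, ZMod (q i), Umat q z n (k + l) * dft q V k := by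
    refine (Fintype.sum_equiv (Equiv.addRight l) _ _ fun k => ?_).symm
    simp [Equiv.coe_addRight, add_sub_cancel_right]
  rw [step1]
  have step2 : ∀ k : ∀ i, ZMod (q i), Umat q z n (k + l) * dft q V k
      = Umat q z n l * (dft q V k * Fmat q n k) := by
    intro k
    rw [Umat_eq_mul, Umat_eq_mul, Fmat_add_right]
    ring
  simp only [step2]
  rw [← Finset.mul_sum]
  have : ∑ k : ∀ i, ZMod (q i), dft q V k * Fmat q n k = V n := fourier_inversion q V n
  rw [this]
  ring

lemma sum_ite_mul_eq {α : Type*} [Fintype α] [DecidableEq α] (A : α) (c : ℂ) (f : α → ℂ) :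
    ∑ n' : α, (if n' = A then c else 0) * f n' = c * f A := by
  simp only [ite_mul, zero_mul]
  rw [Finset.sum_ite_eq' Finset.univ A (fun n' => c * f n')]
  rw [if_pos (Finset.mem_univ A)]

omit [∀ i, NeZero (q i)] in
lemma rho_eq (j : Fin d) (m : ℕ) : rho q j m = Ew (q j) (m : ℤ) := by
  rw [rho, Ew]
  congr 2

lemma conj_eq (V : (∀ i, ZMod (q i)) → ℂ) (z : Fin d → ℂ) (hz : ∀ j, z j ≠ 0) :
    floquetMat q V (fun j => z j ^ q j) * Umat q z
      = Umat q z * (diagA q z + matB q V) := by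
  ext n l
  rw [Matrix.mul_apply, Matrix.mul_apply]
  have lhs_eq : ∑ n' : ∀ i, ZMod (q i), floquetMat q V (fun j => z j ^ q j) n n' * Umat q z n' l
      = (∑ j, ((Ew (q j) ((l j).val) * z j) * Umat q z n l
          + (Ew (q j) ((l j).val) * z j)⁻¹ * Umat q z n l))
        + V n * Umat q z n l := by
    simp only [floquetMat, add_mul, Finset.sum_mul]
    rw [Finset.sum_add_distrib, Finset.sum_comm]
    congr 1
    · refine Finset.sum_congr rfl fun j _ => ?_
      rw [Finset.sum_add_distrib]
      congr 1
      · rw [sum_ite_mul_eq]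
        exact Umat_shift_up q z n l j
      · rw [sum_ite_mul_eq]
        exact Umat_shift_down q z hz n l j
    · rw [sum_ite_mul_eq]
  have rhs_eq : ∑ l' : ∀ i, ZMod (q i), Umat q z n l' * (diagA q z + matB q V) l' l
      = Umat q z n l * (∑ j, (Ew (q j) ((l j).val) * z j + (Ew (q j) ((l j).val) * z j)⁻¹))
        + V n * Umat q z n l := by
    simp only [Matrix.add_apply, mul_add]
    rw [Finset.sum_add_distrib]
    congr 1
    · unfold diagA
      simp only [Matrix.diagonal_apply, mul_ite, mul_zero]
      rw [Finset.sum_ite_eq' Finset.univ l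
        (fun l' => Umat q z n l' * ∑ j, (rho q (j) ((l' j).val) * z j + (rho q j ((l' j).val) * z j)⁻¹))]
      rw [if_pos (Finset.mem_univ l)]
      simp only [rho_eq]
    · show (∑ l' : ∀ i, ZMod (q i), Umat q z n l' * matB q V l' l) = V n * Umat q z n l
      simp only [matB]
      exact (Umat_mulV q V z n l).symm
  rw [lhs_eq, rhs_eq]
  congr 1
  rw [Finset.mul_sum]
  refine Finset.sum_congr rfl fun j _ => ?_
  ring

/-- The inverse-DFT part. -/
def Gmat : Matrix (∀ i, ZMod (q i)) (∀ i, ZMod (q i)) ℂ :=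
  fun n l => ∏ j, Ew (q j) (-(((n j).val : ℤ) * ((l j).val : ℤ)))

lemma Fmat_mul_Gmat : Fmat q * Gmat q = (∏ j, ((q j : ℕ) : ℂ)) • (1 : Matrix _ _ ℂ) := by
  ext n n'
  rw [Matrix.mul_apply]
  have step : ∀ l : ∀ i, ZMod (q i), Fmat q n l * Gmat q l n'
      = ∏ j, Ew (q j) (((((n j).val : ℤ) - ((n' j).val : ℤ)) : ℤ) * ((l j).val : ℤ)) := by
    intro l
    rw [Fmat, Gmat, ← Finset.prod_mul_distrib]
    refine Finset.prod_congr rfl fun j _ => ?_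
    rw [← Ew_add]
    congr 1
    ring
  simp only [step]
  rw [sum_prod_Ew, prod_ite_diag]
  rw [Matrix.smul_apply, Matrix.one_apply]
  by_cases h : n = n' <;> simp [h]

lemma det_Fmat_ne_zero : (Fmat q).det ≠ 0 := by
  intro h
  have h1 := congrArg Matrix.det (Fmat_mul_Gmat q)
  rw [Matrix.det_mul, Matrix.det_smul, Matrix.det_one, mul_one] at h1
  rw [h, zero_mul] at h1
  exact (pow_ne_zero _ (prod_Q_ne_zero q)) h1.symm

lemma det_Umat_ne_zero (z : Fin d → ℂ) (hz : ∀ j, z j ≠ 0) : (Umat q z).det ≠ 0 := by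
  have hU : Umat q z
      = Matrix.diagonal (fun n : ∀ i, ZMod (q i) => ∏ j, z j ^ (n j).val) * Fmat q := by
    ext n l
    rw [Matrix.diagonal_mul, Umat_eq_mul]
  rw [hU, Matrix.det_mul, Matrix.det_diagonal]
  apply mul_ne_zero
  · apply Finset.prod_ne_zero_iff.mpr
    intro n _
    apply Finset.prod_ne_zero_iff.mpr
    intro j _
    exact pow_ne_zero _ (hz j)
  · exact det_Fmat_ne_zero q

end Main


/-- `det(𝒟_V(z₁^{q₁},…,z_d^{q_d}) − λI) = det(A(z) + B_V − λI)`. -/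
theorem stmt5 {d : ℕ} (hd : 1 ≤ d) (q : Fin d → ℕ) [∀ i, NeZero (q i)]
    (V : (∀ i, ZMod (q i)) → ℂ) :
    ∀ z : Fin d → ℂ, (∀ j, z j ≠ 0) → ∀ lam : ℂ,
      (floquetMat q V (fun j => (z j) ^ (q j)) - lam • 1).det
        = (diagA q z + matB q V - lam • 1).det := by
  intro z hz lam
  have hconj := conj_eq q V z hz
  have h2 : (floquetMat q V (fun j => (z j) ^ (q j)) - lam • 1) * Umat q z
      = Umat q z * (diagA q z + matB q V - lam • 1) := by
    rw [sub_mul, mul_sub, hconj, Matrix.smul_mul, Matrix.one_mul, Matrix.mul_smul,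
      Matrix.mul_one]
  have hdet := congrArg Matrix.det h2
  rw [Matrix.det_mul, Matrix.det_mul] at hdet
  have hUne := det_Umat_ne_zero q z hz
  apply mul_right_cancel₀ hUne
  rw [hdet, mul_comm]

end DPSO
end
end

section
/- A function V : W → ℂ is (d₁,…,d_r) separable if and only if V̂(l) = 0 for every l ∈ W such that at least two of the block components l̃_1,…,l̃_r of l are nonzero (where l̃_j ∈ W_j denotes the j-th block of coordinates of l). -/
open scoped BigOperators

noncomputable section

namespace DPSO

lemma exp_int_shift (m : ℕ) [NeZero m] (c : ℤ) (a : ZMod m) :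
    Complex.exp (2 * Real.pi * Complex.I * ((c : ℂ) * (((a + 1 : ZMod m)).val : ℂ) / (m : ℂ)))
      = Complex.exp (2 * Real.pi * Complex.I * ((c : ℂ) / (m : ℂ))) *
        Complex.exp (2 * Real.pi * Complex.I * ((c : ℂ) * ((a.val : ℂ)) / (m : ℂ))) := by
  have hm : (m : ℂ) ≠ 0 := Nat.cast_ne_zero.mpr (NeZero.ne m)
  have hzm : ((((a + 1 : ZMod m)).val : ℤ) : ZMod m) = (((a.val : ℤ) + 1 : ℤ) : ZMod m) := by
    push_cast [ZMod.natCast_val]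
    simp
  obtain ⟨t, ht⟩ : (m : ℤ) ∣ ((a.val : ℤ) + 1) - (((a + 1 : ZMod m)).val : ℤ) :=
    (ZMod.intCast_eq_intCast_iff_dvd_sub _ _ _).mp hzm
  have hval : ((((a + 1 : ZMod m)).val : ℂ)) = (a.val : ℂ) + 1 - (m : ℂ) * (t : ℂ) := by
    have : (((a + 1 : ZMod m)).val : ℤ) = ((a.val : ℤ) + 1) - m * t := by omega
    exact_mod_cast congrArg (Int.cast : ℤ → ℂ) this
  rw [hval]
  rw [show 2 * (Real.pi : ℂ) * Complex.I * ((c : ℂ) * ((a.val : ℂ) + 1 - (m : ℂ) * (t : ℂ)) / (m : ℂ))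
      = (2 * (Real.pi : ℂ) * Complex.I * ((c : ℂ) / (m : ℂ))
        + 2 * (Real.pi : ℂ) * Complex.I * ((c : ℂ) * ((a.val : ℂ)) / (m : ℂ)))
        + ((-(c * t) : ℤ) : ℂ) * (2 * (Real.pi : ℂ) * Complex.I) by
    push_cast
    field_simp
    ring]
  rw [Complex.exp_add, Complex.exp_int_mul_two_pi_mul_I, mul_one, Complex.exp_add]

lemma exp_ne_one (m : ℕ) [NeZero m] (c : ℤ) (hc : ¬ (m : ℤ) ∣ c) :
    Complex.exp (2 * Real.pi * Complex.I * ((c : ℂ) / (m : ℂ))) ≠ 1 := by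
  intro h
  rw [Complex.exp_eq_one_iff] at h
  obtain ⟨k, hk⟩ := h
  have hm : (m : ℂ) ≠ 0 := Nat.cast_ne_zero.mpr (NeZero.ne m)
  have hpi : (2 * (Real.pi : ℂ) * Complex.I) ≠ 0 := by
    simp [Real.pi_ne_zero, Complex.I_ne_zero, Complex.ofReal_ne_zero]
  have : (c : ℂ) = (k : ℂ) * (m : ℂ) := by
    field_simp at hk
    have h2 : (c : ℂ) * (2 * (Real.pi:ℂ) * Complex.I) = ((k:ℂ) * (m:ℂ)) * (2 * (Real.pi:ℂ) * Complex.I) := by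
      rw [mul_comm]; rw [hk]; ring
    exact mul_right_cancel₀ hpi h2
  exact hc ⟨k, by exact_mod_cast this.trans (mul_comm _ _)⟩


lemma sum_eq_zero_of_shift {d : ℕ} (q : Fin d → ℕ) [∀ i, NeZero (q i)]
    (g : (∀ i, ZMod (q i)) → ℂ) (v : ∀ i, ZMod (q i)) (c : ℂ) (hc : c ≠ 1)
    (hg : ∀ n, g (n + v) = c * g n) : ∑ n, g n = 0 := by
  have h1 : ∑ n, g (n + v) = ∑ n, g n :=
    Fintype.sum_bijective (· + v) (Equiv.addRight v).bijective _ _ (fun n => rfl)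
  simp_rw [hg] at h1
  rw [← Finset.mul_sum] at h1
  by_contra h
  exact hc (mul_right_cancel₀ h (h1.trans (one_mul _).symm))

lemma sum_mul_exp_eq_zero {d : ℕ} (q : Fin d → ℕ) [∀ i, NeZero (q i)]
    (A : (∀ i, ZMod (q i)) → ℂ) (c : Fin d → ℤ) (i0 : Fin d)
    (hA : ∀ n, A (n + Pi.single i0 1) = A n)
    (hc : ¬ ((q i0 : ℤ) ∣ c i0)) :
    ∑ n, A n * Complex.exp (2 * Real.pi * Complex.I *
      ∑ j, (c j : ℂ) * ((n j).val : ℂ) / (q j : ℂ)) = 0 := by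
  apply sum_eq_zero_of_shift q _ (Pi.single i0 1)
    (Complex.exp (2 * Real.pi * Complex.I * ((c i0 : ℂ) / (q i0 : ℂ))))
    (exp_ne_one _ _ hc)
  intro n
  rw [hA]
  have hsplit : ∀ x : (∀ i, ZMod (q i)),
      (∑ j, (c j : ℂ) * ((x j).val : ℂ) / (q j : ℂ))
        = (c i0 : ℂ) * ((x i0).val : ℂ) / (q i0 : ℂ)
          + ∑ j ∈ Finset.univ.erase i0, (c j : ℂ) * ((x j).val : ℂ) / (q j : ℂ) := by
    intro x
    rw [← Finset.add_sum_erase _ _ (Finset.mem_univ i0)]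
  rw [hsplit, hsplit n]
  have hrest : ∑ j ∈ Finset.univ.erase i0,
      (c j : ℂ) * ((((n + Pi.single i0 1 : ∀ i, ZMod (q i))) j).val : ℂ) / (q j : ℂ)
      = ∑ j ∈ Finset.univ.erase i0, (c j : ℂ) * ((n j).val : ℂ) / (q j : ℂ) := by
    refine Finset.sum_congr rfl fun j hj => ?_
    have hj' : j ≠ i0 := Finset.ne_of_mem_erase hj
    rw [Pi.add_apply, Pi.single_eq_of_ne hj', add_zero]
  rw [hrest]
  have hi0 : (n + Pi.single i0 1 : ∀ i, ZMod (q i)) i0 = n i0 + 1 := by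
    rw [Pi.add_apply, Pi.single_eq_same]
  rw [hi0]
  rw [mul_add, mul_add, Complex.exp_add, Complex.exp_add]
  rw [show 2 * (Real.pi : ℂ) * Complex.I * ((c i0 : ℂ) * (((n i0 + 1 : ZMod (q i0))).val : ℂ) / (q i0 : ℂ))
      = 2 * Real.pi * Complex.I * ((c i0 : ℂ) * (((n i0 + 1 : ZMod (q i0))).val : ℂ) / ((q i0 : ℕ) : ℂ)) from rfl]
  rw [exp_int_shift (q i0) (c i0) (n i0)]
  ring


lemma inversion {d : ℕ} (q : Fin d → ℕ) [∀ i, NeZero (q i)]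
    (V : (∀ i, ZMod (q i)) → ℂ) (n : ∀ i, ZMod (q i)) :
    ∑ l, dft q V l * Complex.exp (2 * Real.pi * Complex.I *
      ∑ j, ((l j).val : ℂ) * ((n j).val : ℂ) / (q j : ℂ)) = V n := by
  classical
  set Q : ℂ := ∏ i, (q i : ℂ) with hQdef
  have hQ : Q ≠ 0 := Finset.prod_ne_zero_iff.mpr
    (fun i _ => Nat.cast_ne_zero.mpr (NeZero.ne (q i)))
  have hcard : (Fintype.card (∀ i, ZMod (q i)) : ℂ) = Q := by
    rw [hQdef]
    push_cast [Fintype.card_pi, ZMod.card]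
    rfl
  set c : (∀ i, ZMod (q i)) → Fin d → ℤ :=
    fun m j => ((n j).val : ℤ) - ((m j).val : ℤ) with hc
  have step1 : ∀ l, dft q V l * Complex.exp (2 * Real.pi * Complex.I *
      ∑ j, ((l j).val : ℂ) * ((n j).val : ℂ) / (q j : ℂ))
      = (1/Q) * ∑ m, V m * Complex.exp (2 * Real.pi * Complex.I *
          ∑ j, (c m j : ℂ) * ((l j).val : ℂ) / (q j : ℂ)) := by
    intro l
    rw [dft, mul_assoc, Finset.sum_mul]
    congr 1
    apply Finset.sum_congr rfl
    intro m _
    have hterm : ∀ j : Fin d, (c m j : ℂ) * ((l j).val : ℂ) / (q j : ℂ)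
        = ((l j).val : ℂ) * ((n j).val : ℂ) / (q j : ℂ)
          - ((l j).val : ℂ) * ((m j).val : ℂ) / (q j : ℂ) := by
      intro j
      simp only [hc]
      push_cast
      ring
    have hexp : (-(2 * (Real.pi:ℂ) * Complex.I) * ∑ j, ((l j).val:ℂ) * ((m j).val:ℂ) / (q j:ℂ))
        + 2 * (Real.pi:ℂ) * Complex.I * ∑ j, ((l j).val:ℂ) * ((n j).val:ℂ) / (q j:ℂ)
        = 2 * (Real.pi:ℂ) * Complex.I * ∑ j, (c m j : ℂ) * ((l j).val:ℂ) / (q j:ℂ) := by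
      rw [Finset.sum_congr rfl (fun j _ => hterm j), Finset.sum_sub_distrib]
      ring
    rw [mul_assoc (V m), ← Complex.exp_add, hexp]
  rw [Finset.sum_congr rfl (fun l _ => step1 l), ← Finset.mul_sum]
  rw [Finset.sum_comm]
  have inner : ∀ m, (∑ l : ∀ i, ZMod (q i), V m * Complex.exp (2 * Real.pi * Complex.I *
      ∑ j, (c m j : ℂ) * ((l j).val : ℂ) / (q j : ℂ)))
      = if m = n then V m * Q else 0 := by
    intro m
    by_cases hm : m = n
    · subst hm
      have : ∀ l : ∀ i, ZMod (q i), (∑ j, (c m j : ℂ) * ((l j).val : ℂ) / (q j : ℂ)) = 0 := by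
        intro l
        refine Finset.sum_eq_zero fun j _ => ?_
        simp [hc]
      simp only [this, mul_zero, Complex.exp_zero, mul_one, if_pos rfl, if_true]
      rw [Finset.sum_const, Finset.card_univ, nsmul_eq_mul, mul_comm, hcard]
    · rw [if_neg hm]
      rw [← Finset.mul_sum]
      obtain ⟨i0, hi0⟩ : ∃ i0, m i0 ≠ n i0 := by
        by_contra h
        push_neg at h
        exact hm (funext h)
      have hdvd : ¬ ((q i0 : ℤ) ∣ c m i0) := by
        intro h
        have h1 : ((n i0).val : ℤ) < (q i0 : ℤ) := by exact_mod_cast ZMod.val_lt (n i0)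
        have h2 : ((m i0).val : ℤ) < (q i0 : ℤ) := by exact_mod_cast ZMod.val_lt (m i0)
        simp only [hc] at h
        have h0 := Int.eq_zero_of_abs_lt_dvd h (by
          rw [abs_lt]
          constructor <;> omega)
        have : (n i0).val = (m i0).val := by omega
        exact hi0 ((ZMod.val_injective _ this).symm)
      have := sum_mul_exp_eq_zero q (fun _ => (1:ℂ)) (c m) i0 (fun _ => rfl) hdvd
      simp only [one_mul] at this
      rw [this, mul_zero]
  rw [Finset.sum_congr rfl (fun m _ => inner m)]
  rw [Finset.sum_ite_eq' Finset.univ n (fun m => V m * Q)]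
  rw [if_pos (Finset.mem_univ n)]
  field_simp


lemma blockOffset_insert_eq {r : ℕ} (ds : Fin r → ℕ) (j : Fin r) :
    blockOffset ds j + ds j
      = ∑ m ∈ insert j (Finset.univ.filter (fun m : Fin r => m < j)), ds m := by
  have hj : j ∉ Finset.univ.filter (fun m : Fin r => m < j) := by simp
  rw [Finset.sum_insert hj, Nat.add_comm, blockOffset]

lemma blockOffset_add_le_of_lt {r : ℕ} (ds : Fin r → ℕ) {j j' : Fin r} (h : j < j') :
    blockOffset ds j + ds j ≤ blockOffset ds j' := by
  rw [blockOffset_insert_eq, blockOffset]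
  apply Finset.sum_le_sum_of_subset
  intro m hm
  simp only [Finset.mem_insert, Finset.mem_filter, Finset.mem_univ, true_and] at hm ⊢
  rcases hm with rfl | hm
  · exact h
  · exact lt_trans hm h

lemma blockEmb_eq_imp {d r : ℕ} {ds : Fin r → ℕ} {hsum : ∑ m, ds m = d} {j j' : Fin r}
    {b : Fin (ds j)} {b' : Fin (ds j')}
    (h : blockEmb ds hsum j b = blockEmb ds hsum j' b') : j = j' := by
  by_contra hne
  have hval : blockOffset ds j + b.val = blockOffset ds j' + b'.val := by
    have := congrArg Fin.val h
    simpa [blockEmb] using this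
  have hb := b.isLt
  have hb' := b'.isLt
  rcases lt_or_gt_of_ne hne with hlt | hlt
  · have := blockOffset_add_le_of_lt ds hlt
    omega
  · have := blockOffset_add_le_of_lt ds hlt
    omega

lemma blockOffset_succ {r : ℕ} (ds : Fin r → ℕ) {j j' : Fin r} (h : j'.val = j.val + 1) :
    blockOffset ds j' = blockOffset ds j + ds j := by
  rw [blockOffset_insert_eq, blockOffset]
  congr 1
  ext m
  simp only [Finset.mem_filter, Finset.mem_univ, true_and, Finset.mem_insert, Fin.lt_def]
  constructor
  · intro hm
    rcases Nat.lt_or_ge m.val j.val with h1 | h1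
    · exact Or.inr h1
    · exact Or.inl (Fin.ext (by omega))
  · rintro (rfl | hm) <;> omega

lemma exists_blockEmb {d r : ℕ} (hr : 0 < r) (ds : Fin r → ℕ) (hsum : ∑ m, ds m = d)
    (i : Fin d) : ∃ j b, blockEmb ds hsum j b = i := by
  classical
  set s : Finset (Fin r) := Finset.univ.filter (fun j => blockOffset ds j ≤ i.val) with hsdef
  have h0 : blockOffset ds ⟨0, hr⟩ = 0 := by
    rw [blockOffset]
    rw [Finset.filter_false_of_mem, Finset.sum_empty]
    intro m _
    simp [Fin.lt_def]
  have hs : s.Nonempty := ⟨⟨0, hr⟩, by simp [hsdef, h0]⟩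
  set j := s.max' hs with hjdef
  have hj1 : blockOffset ds j ≤ i.val := (Finset.mem_filter.mp (s.max'_mem hs)).2
  have hj2 : i.val < blockOffset ds j + ds j := by
    by_contra hcon
    push_neg at hcon
    by_cases hlast : j.val + 1 < r
    · have hsucc : blockOffset ds ⟨j.val + 1, hlast⟩ = blockOffset ds j + ds j :=
        blockOffset_succ ds rfl
      have hmem : (⟨j.val + 1, hlast⟩ : Fin r) ∈ s :=
        Finset.mem_filter.mpr ⟨Finset.mem_univ _, by
          show blockOffset ds ⟨j.val + 1, hlast⟩ ≤ i.val
          rw [hsucc]; omega⟩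
      have hle := s.le_max' _ hmem
      rw [Fin.le_def] at hle
      have : (s.max' hs).val = j.val := by rw [← hjdef]
      have hv : (⟨j.val + 1, hlast⟩ : Fin r).val = j.val + 1 := rfl
      omega
    · have hall : blockOffset ds j + ds j = ∑ m, ds m := by
        rw [blockOffset_insert_eq]
        congr 1
        ext m
        simp only [Finset.mem_insert, Finset.mem_filter, Finset.mem_univ, true_and,
          Fin.lt_def, iff_true]
        have := m.isLt
        have := j.isLt
        rcases Nat.lt_or_ge m.val j.val with h1 | h1
        · exact Or.inr h1
        · exact Or.inl (Fin.ext (by omega))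
      rw [hsum] at hall
      have := i.isLt
      omega
  refine ⟨j, ⟨i.val - blockOffset ds j, by omega⟩, Fin.ext ?_⟩
  simp only [blockEmb]
  omega


lemma blockEmb_injective {d r : ℕ} (ds : Fin r → ℕ) (hsum : ∑ m, ds m = d) (j : Fin r) :
    Function.Injective (blockEmb ds hsum j) := by
  intro b b' h
  have := congrArg Fin.val h
  simp only [blockEmb] at this
  exact Fin.ext (by omega)


set_option maxHeartbeats 1000000 in
/-- `V` is `(d₁,…,d_r)` separable iff `V̂(l) = 0` for every `l` having at least
two nonzero block components. -/
theorem stmt6 {d r : ℕ} (hd : 1 ≤ d) (hr : 2 ≤ r)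
    (q : Fin d → ℕ) [∀ i, NeZero (q i)]
    (ds : Fin r → ℕ) (hds : ∀ j, 1 ≤ ds j) (hsum : ∑ m, ds m = d)
    (V : (∀ i, ZMod (q i)) → ℂ) :
    IsSeparable q ds hsum V ↔
      ∀ l : ∀ i, ZMod (q i),
        (∃ j j' : Fin r, j ≠ j' ∧ (∃ b, l (blockEmb ds hsum j b) ≠ 0)
          ∧ (∃ b, l (blockEmb ds hsum j' b) ≠ 0)) →
        dft q V l = 0 := by
  classical
  have hr0 : 0 < r := by omega
  constructor
  · rintro ⟨F, hF⟩ l ⟨j1, j2, hne, ⟨b1, hb1⟩, ⟨b2, hb2⟩⟩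
    rw [dft]
    have hexp : ∀ n : ∀ i, ZMod (q i),
        Complex.exp (-(2 * Real.pi * Complex.I) *
          ∑ j, ((l j).val : ℂ) * ((n j).val : ℂ) / (q j : ℂ))
        = Complex.exp (2 * Real.pi * Complex.I *
          ∑ i, (((-((l i).val : ℤ)) : ℤ) : ℂ) * ((n i).val : ℂ) / (q i : ℂ)) := by
      intro n
      congr 1
      have hterm : ∀ i : Fin d, (((-((l i).val : ℤ)) : ℤ) : ℂ) * ((n i).val : ℂ) / (q i : ℂ)
          = -(((l i).val : ℂ) * ((n i).val : ℂ) / (q i : ℂ)) := by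
        intro i
        push_cast
        ring
      rw [Finset.sum_congr rfl (fun i _ => hterm i), Finset.sum_neg_distrib]
      ring
    have hzero : ∑ n : ∀ i, ZMod (q i), V n *
        Complex.exp (-(2 * Real.pi * Complex.I) *
          ∑ j, ((l j).val : ℂ) * ((n j).val : ℂ) / (q j : ℂ)) = 0 := by
      have hrw : ∀ n : ∀ i, ZMod (q i), V n *
          Complex.exp (-(2 * Real.pi * Complex.I) *
            ∑ j, ((l j).val : ℂ) * ((n j).val : ℂ) / (q j : ℂ))
          = ∑ j : Fin r, (F j (fun b => n (blockEmb ds hsum j b)) *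
              Complex.exp (2 * Real.pi * Complex.I *
                ∑ i, (((-((l i).val : ℤ)) : ℤ) : ℂ) * ((n i).val : ℂ) / (q i : ℂ))) := by
        intro n
        rw [hF n, hexp n, Finset.sum_mul]
      rw [Finset.sum_congr rfl (fun n _ => hrw n), Finset.sum_comm]
      refine Finset.sum_eq_zero fun j _ => ?_
      -- pick an active block different from j
      obtain ⟨jstar, bstar, hbstar, hjstar⟩ :
          ∃ jstar bstar, l (blockEmb ds hsum jstar bstar) ≠ 0 ∧ jstar ≠ j := by
        by_cases hj : j = j1
        · exact ⟨j2, b2, hb2, by rw [hj]; exact hne.symm⟩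
        · exact ⟨j1, b1, hb1, fun h => hj h.symm⟩
      set i0 : Fin d := blockEmb ds hsum jstar bstar with hi0
      apply sum_mul_exp_eq_zero q _ (fun i => -((l i).val : ℤ)) i0
      · intro n
        congr 1
        funext b
        have hne' : blockEmb ds hsum j b ≠ i0 := by
          intro h
          exact hjstar (blockEmb_eq_imp h.symm)
        show (n + Pi.single i0 1 : ∀ i, ZMod (q i)) (blockEmb ds hsum j b) = n (blockEmb ds hsum j b)
        rw [Pi.add_apply, Pi.single_eq_of_ne hne', add_zero]
      · rw [Int.dvd_neg]
        intro hdvd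
        have hdvd' : q i0 ∣ (l i0).val := by exact_mod_cast hdvd
        have hpos : 0 < (l i0).val := by
          rcases Nat.eq_zero_or_pos (l i0).val with h0 | h0
          · exact absurd ((ZMod.val_eq_zero _).mp h0) hbstar
          · exact h0
        have := Nat.le_of_dvd hpos hdvd'
        have := ZMod.val_lt (l i0)
        omega
    rw [hzero, mul_zero]
  · intro h
    set A : Fin r → Finset (∀ i, ZMod (q i)) := fun j =>
      Finset.univ.filter (fun l => l ≠ 0 ∧ ∀ j', j' ≠ j → ∀ b, l (blockEmb ds hsum j' b) = 0)
      with hA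
    set E : (∀ i, ZMod (q i)) → (∀ i, ZMod (q i)) → ℂ := fun l n =>
      Complex.exp (2 * Real.pi * Complex.I *
        ∑ i, ((l i).val : ℂ) * ((n i).val : ℂ) / (q i : ℂ)) with hE
    set j0 : Fin r := ⟨0, hr0⟩ with hj0
    refine ⟨fun j x => (if j = j0 then dft q V 0 else 0)
      + ∑ l ∈ A j, dft q V l * Complex.exp (2 * Real.pi * Complex.I *
          ∑ b, ((l (blockEmb ds hsum j b)).val : ℂ) * ((x b).val : ℂ)
            / (q (blockEmb ds hsum j b) : ℂ)), ?_⟩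
    intro n
    have hAmem : ∀ j l, l ∈ A j ↔ l ≠ 0 ∧ ∀ j', j' ≠ j → ∀ b, l (blockEmb ds hsum j' b) = 0 := by
      intro j l
      rw [hA]
      simp
    -- block exponent = full exponent for l ∈ A j
    have hblock : ∀ j : Fin r, ∀ l ∈ A j,
        (∑ b, ((l (blockEmb ds hsum j b)).val : ℂ) * ((n (blockEmb ds hsum j b)).val : ℂ)
          / (q (blockEmb ds hsum j b) : ℂ))
        = ∑ i, ((l i).val : ℂ) * ((n i).val : ℂ) / (q i : ℂ) := by
      intro j l hl
      obtain ⟨hl0, hsupp⟩ := (hAmem j l).mp hl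
      have hinj : ∀ x ∈ (Finset.univ : Finset (Fin (ds j))), ∀ y ∈ (Finset.univ : Finset (Fin (ds j))),
          blockEmb ds hsum j x = blockEmb ds hsum j y → x = y :=
        fun x _ y _ hxy => blockEmb_injective ds hsum j hxy
      have himg : (∑ i ∈ (Finset.univ : Finset (Fin (ds j))).image (blockEmb ds hsum j),
              ((l i).val : ℂ) * ((n i).val : ℂ) / (q i : ℂ))
          = ∑ b : Fin (ds j), ((l (blockEmb ds hsum j b)).val : ℂ)
              * ((n (blockEmb ds hsum j b)).val : ℂ) / (q (blockEmb ds hsum j b) : ℂ) :=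
        Finset.sum_image hinj
      rw [← himg]
      apply Finset.sum_subset (Finset.subset_univ _)
      intro i _ hi
      obtain ⟨j', b', hb'⟩ := exists_blockEmb hr0 ds hsum i
      by_cases hj' : j' = j
      · exfalso
        subst hj'
        apply hi
        rw [Finset.mem_image]
        exact ⟨b', Finset.mem_univ _, hb'⟩
      · have : l i = 0 := by rw [← hb']; exact hsupp j' hj' b'
        rw [this]
        simp
    -- disjointness
    have hdisj : ((Finset.univ : Finset (Fin r)) : Set (Fin r)).PairwiseDisjoint A := by
      intro j hj j' hj' hjj'
      show Disjoint (A j) (A j')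
      rw [Finset.disjoint_left]
      intro l hlj hlj'
      obtain ⟨hl0, hs1⟩ := (hAmem j l).mp hlj
      obtain ⟨-, hs2⟩ := (hAmem j' l).mp hlj'
      apply hl0
      funext i
      obtain ⟨j'', b'', hb''⟩ := exists_blockEmb hr0 ds hsum i
      by_cases hc : j'' = j
      · rw [← hb'']
        exact hs2 j'' (by rw [hc]; exact hjj') b''
      · rw [← hb'']
        exact hs1 j'' hc b''
    have h0notin : (0 : ∀ i, ZMod (q i)) ∉ Finset.univ.biUnion A := by
      rw [Finset.mem_biUnion]
      rintro ⟨j, -, hmem⟩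
      exact ((hAmem j 0).mp hmem).1 rfl
    have hvanish : ∀ l ∈ (Finset.univ : Finset (∀ i, ZMod (q i))),
        l ∉ insert 0 (Finset.univ.biUnion A) → dft q V l * E l n = 0 := by
      intro l _ hl
      rw [Finset.mem_insert, Finset.mem_biUnion] at hl
      push_neg at hl
      obtain ⟨hl0, hlA⟩ := hl
      obtain ⟨i, hi⟩ : ∃ i, l i ≠ 0 := by
        by_contra hc
        push_neg at hc
        exact hl0 (funext hc)
      obtain ⟨j1, b1, hb1⟩ := exists_blockEmb hr0 ds hsum i
      have := hlA j1 (Finset.mem_univ j1)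
      rw [hAmem] at this
      push_neg at this
      obtain ⟨j', hj'ne, b', hb'⟩ := this hl0
      have hz : dft q V l = 0 := h l ⟨j1, j', fun hc => hj'ne hc.symm,
        ⟨b1, by rw [hb1]; exact hi⟩, ⟨b', hb'⟩⟩
      rw [hz, zero_mul]
    have hE0 : E 0 n = 1 := by
      rw [hE]
      simp
    calc V n = ∑ l, dft q V l * E l n := by
          rw [hE]
          exact (inversion q V n).symm
      _ = ∑ l ∈ insert 0 (Finset.univ.biUnion A), dft q V l * E l n :=
          (Finset.sum_subset (Finset.subset_univ _) hvanish).symm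
      _ = dft q V 0 * E 0 n + ∑ l ∈ Finset.univ.biUnion A, dft q V l * E l n :=
          Finset.sum_insert h0notin
      _ = dft q V 0 + ∑ j : Fin r, ∑ l ∈ A j, dft q V l * E l n := by
          rw [Finset.sum_biUnion hdisj, hE0, mul_one]
      _ = ∑ j : Fin r, ((if j = j0 then dft q V 0 else 0)
            + ∑ l ∈ A j, dft q V l * Complex.exp (2 * Real.pi * Complex.I *
                ∑ b, ((l (blockEmb ds hsum j b)).val : ℂ)
                  * ((n (blockEmb ds hsum j b)).val : ℂ)
                  / (q (blockEmb ds hsum j b) : ℂ))) := by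
          rw [Finset.sum_add_distrib]
          congr 1
          · rw [Finset.sum_ite_eq' Finset.univ j0 (fun _ => dft q V 0),
              if_pos (Finset.mem_univ _)]
          · apply Finset.sum_congr rfl
            intro j _
            apply Finset.sum_congr rfl
            intro l hl
            simp only [hE]
            rw [← hblock j l hl]


end DPSO
end
end

section
/- Let V, Y : W → ℝ be real-valued Γ-periodic potentials that are Floquet isospectral. Then Σ_{l∈W} |V̂(l)|² = Σ_{l∈W} |Ŷ(l)|². -/
open scoped BigOperators

noncomputable section

namespace DPSO

section Spectral
open Matrix Polynomial
variable {n : Type*} [Fintype n] [DecidableEq n]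

lemma charpoly_unitary_conj (U : Matrix.unitaryGroup n ℂ) (M : Matrix n n ℂ) :
    ((U : Matrix n n ℂ) * M * star (U : Matrix n n ℂ)).charpoly = M.charpoly := by
  set Uc : Matrix n n ℂ := (U : Matrix n n ℂ)
  have hU : Uc * star Uc = 1 := Unitary.mul_star_self_of_mem U.2
  set f : Matrix n n ℂ →+* Matrix n n ℂ[X] := (C : ℂ →+* ℂ[X]).mapMatrix
  have hscalar : Matrix.scalar n (X : ℂ[X]) = (X : ℂ[X]) • (1 : Matrix n n ℂ[X]) := by
    rw [Matrix.scalar_apply, Matrix.smul_one_eq_diagonal]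
  have hkey : charmatrix (Uc * M * star Uc) = f Uc * charmatrix M * f (star Uc) := by
    rw [charmatrix, charmatrix, mul_sub, sub_mul, _root_.map_mul, _root_.map_mul, hscalar]
    congr 1
    rw [mul_smul_comm, smul_mul_assoc, mul_one, ← _root_.map_mul, hU, _root_.map_one]
  have hdet : (f (star Uc)).det * (f Uc).det = 1 := by
    rw [← det_mul, ← _root_.map_mul, Unitary.star_mul_self_of_mem U.2, _root_.map_one, det_one]
  rw [charpoly, charpoly, hkey, det_mul, det_mul, mul_comm, ← mul_assoc, hdet, one_mul]

lemma charpoly_diagonal' (v : n → ℂ) :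
    (Matrix.diagonal v).charpoly = ∏ i, (X - C (v i)) := by
  have h : charmatrix (Matrix.diagonal v) = Matrix.diagonal (fun i => X - C (v i)) := by
    ext i j
    by_cases h : i = j
    · subst h; simp
    · simp [Matrix.diagonal_apply_ne _ h, charmatrix_apply_ne _ _ _ h]
  rw [charpoly, h, det_diagonal]

lemma herm_charpoly {A : Matrix n n ℂ} (hA : A.IsHermitian) :
    A.charpoly = ∏ i, (X - C ((hA.eigenvalues i : ℝ) : ℂ)) := by
  conv_lhs => rw [hA.spectral_theorem]
  simp only [Unitary.conjStarAlgAut_apply, Unitary.coe_star]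
  rw [charpoly_unitary_conj, charpoly_diagonal']
  rfl

lemma herm_trace_sq {A : Matrix n n ℂ} (hA : A.IsHermitian) :
    (A * A).trace = ∑ i, (((hA.eigenvalues i : ℝ) : ℂ)) ^ 2 := by
  set U : Matrix n n ℂ := (hA.eigenvectorUnitary : Matrix n n ℂ)
  set D : Matrix n n ℂ := Matrix.diagonal (RCLike.ofReal ∘ hA.eigenvalues)
  have hU : star U * U = 1 := Unitary.star_mul_self_of_mem hA.eigenvectorUnitary.2
  have h1 : A * A = U * (D * D) * star U := by
    conv_lhs => rw [hA.spectral_theorem]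
    simp only [Unitary.conjStarAlgAut_apply, Unitary.coe_star, mul_assoc]
    rw [← mul_assoc (star U) U, hU, one_mul]
  rw [h1, trace_mul_cycle, ← mul_assoc, hU, one_mul, diagonal_mul_diagonal, trace_diagonal]
  simp [sq]

lemma herm_eigs_multiset_eq {A B : Matrix n n ℂ} (hA : A.IsHermitian) (hB : B.IsHermitian)
    (h : A.charpoly = B.charpoly) :
    Multiset.map (fun i => ((hA.eigenvalues i : ℝ) : ℂ)) Finset.univ.val
      = Multiset.map (fun i => ((hB.eigenvalues i : ℝ) : ℂ)) Finset.univ.val := by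
  have key : ∀ (v : n → ℂ), Multiset.map v Finset.univ.val = (∏ i, (X - C (v i))).roots := by
    intro v
    rw [Finset.prod_eq_multiset_prod, ← Polynomial.roots_multiset_prod_X_sub_C
      (Multiset.map v Finset.univ.val), Multiset.map_map]
    rfl
  rw [key, key, ← herm_charpoly hA, ← herm_charpoly hB, h]

lemma herm_trace_sq_eq {A B : Matrix n n ℂ} (hA : A.IsHermitian) (hB : B.IsHermitian)
    (h : A.charpoly = B.charpoly) :
    (A * A).trace = (B * B).trace := by
  rw [herm_trace_sq hA, herm_trace_sq hB]
  have hm := herm_eigs_multiset_eq hA hB h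
  calc ∑ i, (((hA.eigenvalues i : ℝ) : ℂ)) ^ 2
      = ((Multiset.map (fun i => ((hA.eigenvalues i : ℝ) : ℂ)) Finset.univ.val).map
          (fun x => x ^ 2)).sum := by
        rw [Multiset.map_map]; rfl
    _ = ((Multiset.map (fun i => ((hB.eigenvalues i : ℝ) : ℂ)) Finset.univ.val).map
          (fun x => x ^ 2)).sum := by rw [hm]
    _ = _ := by rw [Multiset.map_map]; rfl

end Spectral

variable {d : ℕ} (q : Fin d → ℕ) [∀ i, NeZero (q i)]

lemma floquetMat_split (V : (∀ i, ZMod (q i)) → ℂ) (z : Fin d → ℂ) :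
    floquetMat q V z = floquetMat q 0 z + Matrix.diagonal V := by
  ext n n'
  simp only [floquetMat, Matrix.add_apply, Matrix.diagonal_apply, Pi.zero_apply]
  by_cases h : n' = n
  · subst h; simp
  · simp [h, Ne.symm h]

lemma single_one_eq_zero_iff (j : Fin d) :
    (Pi.single j 1 : ∀ i, ZMod (q i)) = 0 ↔ q j = 1 := by
  constructor
  · intro h
    by_contra hq
    have h2 : 2 ≤ q j := by
      have := (inferInstance : NeZero (q j)).out
      omega
    haveI : Fact (1 < q j) := ⟨h2⟩
    have := congrFun h j
    rw [Pi.single_eq_same, Pi.zero_apply] at this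
    exact one_ne_zero this
  · intro h
    funext i
    by_cases hij : i = j
    · subst hij
      haveI : Subsingleton (ZMod (q i)) := by rw [h]; infer_instance
      exact Subsingleton.elim _ _
    · rw [Pi.single_eq_of_ne hij, Pi.zero_apply]

lemma self_eq_add_single_iff (n : ∀ i, ZMod (q i)) (j : Fin d) :
    n = n + Pi.single j 1 ↔ q j = 1 := by
  rw [left_eq_add, single_one_eq_zero_iff]

lemma self_eq_sub_single_iff (n : ∀ i, ZMod (q i)) (j : Fin d) :
    n = n - Pi.single j 1 ↔ q j = 1 := by
  rw [eq_sub_iff_add_eq, add_eq_left, single_one_eq_zero_iff]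

lemma floquetMat_zero_diag (z : Fin d → ℂ) (n : ∀ i, ZMod (q i)) :
    floquetMat q (0 : (∀ i, ZMod (q i)) → ℂ) z n n = ∑ j, (if q j = 1 then z j + (z j)⁻¹ else 0) := by
  simp only [floquetMat, Pi.zero_apply, ite_self, add_zero]
  refine Finset.sum_congr rfl fun j _ => ?_
  by_cases h : q j = 1
  · have hval : (n j).val = 0 := by
      haveI : Subsingleton (ZMod (q j)) := by rw [h]; infer_instance
      rw [Subsingleton.elim (n j) 0, ZMod.val_zero]
    rw [if_pos ((self_eq_add_single_iff q n j).mpr h),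
      if_pos ((self_eq_sub_single_iff q n j).mpr h), if_pos, if_pos hval, if_pos h]
    rw [hval, h]
  · rw [if_neg (fun hc => h ((self_eq_add_single_iff q n j).mp hc)),
      if_neg (fun hc => h ((self_eq_sub_single_iff q n j).mp hc)), if_neg h, add_zero]

lemma trace_floquetMat (V : (∀ i, ZMod (q i)) → ℂ) (z : Fin d → ℂ) :
    (floquetMat q V z).trace = (floquetMat q 0 z).trace + ∑ n, V n := by
  rw [floquetMat_split, Matrix.trace_add, Matrix.trace_diagonal]

lemma trace_sq_floquetMat (V : (∀ i, ZMod (q i)) → ℂ) (z : Fin d → ℂ) :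
    (floquetMat q V z * floquetMat q V z).trace
      = (floquetMat q 0 z * floquetMat q 0 z).trace
        + 2 * ((∑ j, (if q j = 1 then z j + (z j)⁻¹ else 0)) * ∑ n, V n)
        + ∑ n, (V n) ^ 2 := by
  have hHD : (floquetMat q 0 z * Matrix.diagonal V).trace
      = (∑ j, (if q j = 1 then z j + (z j)⁻¹ else 0)) * ∑ n, V n := by
    rw [Matrix.trace]
    simp only [Matrix.diag_apply, Matrix.mul_diagonal]
    rw [Finset.mul_sum]
    exact Finset.sum_congr rfl fun n _ => by rw [floquetMat_zero_diag]
  rw [floquetMat_split, add_mul, mul_add, mul_add, Matrix.trace_add, Matrix.trace_add,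
    Matrix.trace_add, Matrix.trace_mul_comm (Matrix.diagonal V), hHD,
    Matrix.diagonal_mul_diagonal, Matrix.trace_diagonal]
  have : ∑ n, (V n) ^ 2 = ∑ n, V n * V n := by
    exact Finset.sum_congr rfl fun n _ => sq (V n)
  rw [this]
  ring

lemma floquetMat_isHermitian (V : (∀ i, ZMod (q i)) → ℝ) :
    (floquetMat q (fun n => (V n : ℂ)) (fun _ => 1)).IsHermitian := by
  rw [Matrix.IsHermitian]
  ext n n'
  rw [Matrix.conjTranspose_apply]
  simp only [floquetMat, inv_one, ite_self, star_add, star_sum, apply_ite (star : ℂ → ℂ), star_one, star_zero]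
  congr 1
  · refine Finset.sum_congr rfl fun j _ => ?_
    rw [add_comm]
    congr 1
    · have : n = n' - Pi.single j 1 ↔ n' = n + Pi.single j 1 := by
        constructor
        · intro h; rw [h, sub_add_cancel]
        · intro h; rw [h, add_sub_cancel_right]
      simp only [this]
    · have : n = n' + Pi.single j 1 ↔ n' = n - Pi.single j 1 := by
        constructor
        · intro h; rw [h, add_sub_cancel_right]
        · intro h; rw [h, sub_add_cancel]
      simp only [this]
  · by_cases h : n' = n
    · subst h; simp [Complex.conj_ofReal]
    · simp [h, Ne.symm h]


lemma zmod_char_sum {N : ℕ} [NeZero N] (a b : ZMod N) :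
    ∑ x : ZMod N, Complex.exp (2 * (Real.pi : ℂ) * Complex.I * (x.val : ℂ)
        * ((b.val : ℂ) - (a.val : ℂ)) / (N : ℂ))
      = if a = b then (N : ℂ) else 0 := by
  have hN : (N : ℂ) ≠ 0 := Nat.cast_ne_zero.mpr (NeZero.ne N)
  by_cases hab : a = b
  · subst hab
    simp [ZMod.card]
  · rw [if_neg hab]
    set w := Complex.exp (2 * (Real.pi : ℂ) * Complex.I * ((b.val : ℂ) - (a.val : ℂ)) / (N : ℂ))
      with hw
    have hterm : ∀ x : ZMod N,
        Complex.exp (2 * (Real.pi : ℂ) * Complex.I * (x.val : ℂ)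
          * ((b.val : ℂ) - (a.val : ℂ)) / (N : ℂ)) = w ^ x.val := by
      intro x
      rw [hw, ← Complex.exp_nat_mul]
      congr 1
      ring
    have hsum : ∑ x : ZMod N, w ^ x.val = ∑ k ∈ Finset.range N, w ^ k := by
      refine Finset.sum_nbij' (fun x : ZMod N => x.val) (fun k => (k : ZMod N)) ?_ ?_ ?_ ?_ ?_
      · intro x _; exact Finset.mem_range.mpr (ZMod.val_lt x)
      · intro k _; exact Finset.mem_univ _
      · intro x _; exact ZMod.natCast_rightInverse x
      · intro k hk; exact ZMod.val_cast_of_lt (Finset.mem_range.mp hk)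
      · intro x _; rfl
    have hwN : w ^ N = 1 := by
      rw [hw, ← Complex.exp_nat_mul]
      have : (N : ℂ) * (2 * (Real.pi : ℂ) * Complex.I * ((b.val : ℂ) - (a.val : ℂ)) / (N : ℂ))
          = (((b.val : ℤ) - (a.val : ℤ) : ℤ) : ℂ) * (2 * (Real.pi : ℂ) * Complex.I) := by
        push_cast
        field_simp
      rw [this, Complex.exp_int_mul_two_pi_mul_I]
    have hw1 : w ≠ 1 := by
      intro h
      rw [hw, Complex.exp_eq_one_iff] at h
      obtain ⟨m, hm⟩ := h
      have hdiff : (b.val : ℂ) - (a.val : ℂ) = (m : ℂ) * (N : ℂ) := by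
        have h2 : 2 * (Real.pi : ℂ) * Complex.I * (((b.val : ℂ) - (a.val : ℂ)) / (N : ℂ))
            = 2 * (Real.pi : ℂ) * Complex.I * (m : ℂ) := by
          rw [← mul_div_assoc]
          rw [hm]; ring
        have h3 := mul_left_cancel₀ Complex.two_pi_I_ne_zero h2
        rwa [div_eq_iff hN] at h3
      have hint : (b.val : ℤ) - (a.val : ℤ) = m * (N : ℤ) := by exact_mod_cast hdiff
      have hdvd : (N : ℤ) ∣ (b.val : ℤ) - (a.val : ℤ) := ⟨m, by rw [hint]; ring⟩
      have hbound : |(b.val : ℤ) - (a.val : ℤ)| < (N : ℤ) := by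
        have h1 := ZMod.val_lt a
        have h2 := ZMod.val_lt b
        rw [abs_lt]; omega
      have hz := Int.eq_zero_of_abs_lt_dvd hdvd hbound
      have hval : a.val = b.val := by omega
      exact hab (ZMod.val_injective N hval)
    calc ∑ x : ZMod N, Complex.exp (2 * (Real.pi : ℂ) * Complex.I * (x.val : ℂ)
          * ((b.val : ℂ) - (a.val : ℂ)) / (N : ℂ))
        = ∑ x : ZMod N, w ^ x.val := Finset.sum_congr rfl fun x _ => hterm x
      _ = ∑ k ∈ Finset.range N, w ^ k := hsum
      _ = (w ^ N - 1) / (w - 1) := geom_sum_eq hw1 N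
      _ = 0 := by rw [hwN]; simp

variable {d : ℕ} (q : Fin d → ℕ) [∀ i, NeZero (q i)]

lemma sum_E (n m : ∀ i, ZMod (q i)) :
    ∑ l : ∀ i, ZMod (q i),
        Complex.exp (-(2 * Real.pi * Complex.I) * ∑ j, ((l j).val : ℂ) * ((n j).val : ℂ) / (q j : ℂ))
          * (starRingEnd ℂ) (Complex.exp (-(2 * Real.pi * Complex.I) *
              ∑ j, ((l j).val : ℂ) * ((m j).val : ℂ) / (q j : ℂ)))
      = if n = m then (∏ i, (q i : ℂ)) else 0 := by
  have hpt : ∀ l : ∀ i, ZMod (q i),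
      Complex.exp (-(2 * Real.pi * Complex.I) * ∑ j, ((l j).val : ℂ) * ((n j).val : ℂ) / (q j : ℂ))
        * (starRingEnd ℂ) (Complex.exp (-(2 * Real.pi * Complex.I) *
            ∑ j, ((l j).val : ℂ) * ((m j).val : ℂ) / (q j : ℂ)))
      = ∏ j, Complex.exp (2 * (Real.pi : ℂ) * Complex.I * (((l j).val : ℂ))
          * (((m j).val : ℂ) - ((n j).val : ℂ)) / (q j : ℂ)) := by
    intro l
    rw [← Complex.exp_sum, ← Complex.exp_conj, ← Complex.exp_add]
    congr 1
    simp only [map_mul, map_neg, map_sum, map_div₀, Complex.conj_I, Complex.conj_ofReal,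
      map_natCast, map_ofNat]
    rw [Finset.mul_sum, Finset.mul_sum, ← Finset.sum_add_distrib]
    refine Finset.sum_congr rfl fun j _ => ?_
    ring
  rw [Finset.sum_congr rfl fun l _ => hpt l]
  rw [← Fintype.piFinset_univ,
    ← Finset.prod_univ_sum (fun j : Fin d => (Finset.univ : Finset (ZMod (q j))))
      (fun j x => Complex.exp (2 * (Real.pi : ℂ) * Complex.I * ((x.val : ℂ))
        * (((m j).val : ℂ) - ((n j).val : ℂ)) / (q j : ℂ)))]
  have hfac : ∀ j : Fin d, ∑ x : ZMod (q j),
      Complex.exp (2 * (Real.pi : ℂ) * Complex.I * ((x.val : ℂ))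
        * (((m j).val : ℂ) - ((n j).val : ℂ)) / (q j : ℂ))
      = if n j = m j then (q j : ℂ) else 0 := fun j => zmod_char_sum (n j) (m j)
  rw [Finset.prod_congr rfl fun j _ => hfac j]
  by_cases h : n = m
  · subst h; simp
  · rw [if_neg h]
    have : ∃ j, n j ≠ m j := by
      by_contra hc
      push_neg at hc
      exact h (funext hc)
    obtain ⟨j, hj⟩ := this
    exact Finset.prod_eq_zero (Finset.mem_univ j) (if_neg hj)

lemma parseval (V : (∀ i, ZMod (q i)) → ℂ) :
    ∑ l : ∀ i, ZMod (q i), dft q V l * (starRingEnd ℂ) (dft q V l)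
      = (1 / ∏ i, (q i : ℂ)) * ∑ n, V n * (starRingEnd ℂ) (V n) := by
  have hQ : (∏ i, (q i : ℂ)) ≠ 0 :=
    Finset.prod_ne_zero_iff.mpr fun i _ => Nat.cast_ne_zero.mpr (NeZero.ne (q i))
  have hcQ : (starRingEnd ℂ) (1 / ∏ i, (q i : ℂ)) = 1 / ∏ i, (q i : ℂ) := by
    simp [map_prod]
  set c : ℂ := 1 / ∏ i, (q i : ℂ) with hc
  set E : (∀ i, ZMod (q i)) → (∀ i, ZMod (q i)) → ℂ := fun l n =>
    Complex.exp (-(2 * Real.pi * Complex.I) * ∑ j, ((l j).val : ℂ) * ((n j).val : ℂ) / (q j : ℂ))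
    with hE
  have step : ∀ l, dft q V l * (starRingEnd ℂ) (dft q V l)
      = c * c * ∑ n, ∑ m, (V n * (starRingEnd ℂ) (V m)) * (E l n * (starRingEnd ℂ) (E l m)) := by
    intro l
    have : dft q V l = c * ∑ n, V n * E l n := rfl
    rw [this, map_mul, hcQ, map_sum, mul_mul_mul_comm, Finset.sum_mul_sum]
    congr 1
    refine Finset.sum_congr rfl fun n _ => ?_
    refine Finset.sum_congr rfl fun m _ => ?_
    rw [map_mul]
    ring
  rw [Finset.sum_congr rfl fun l _ => step l, ← Finset.mul_sum]
  rw [Finset.sum_comm]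
  have swap2 : ∑ n, ∑ l, ∑ m, (V n * (starRingEnd ℂ) (V m)) * (E l n * (starRingEnd ℂ) (E l m))
      = ∑ n, ∑ m, (V n * (starRingEnd ℂ) (V m)) * ∑ l, (E l n * (starRingEnd ℂ) (E l m)) := by
    refine Finset.sum_congr rfl fun n _ => ?_
    rw [Finset.sum_comm]
    refine Finset.sum_congr rfl fun m _ => ?_
    rw [Finset.mul_sum]
  rw [swap2]
  have inner : ∀ n, ∑ m, (V n * (starRingEnd ℂ) (V m)) * ∑ l, (E l n * (starRingEnd ℂ) (E l m))
      = (V n * (starRingEnd ℂ) (V n)) * (∏ i, (q i : ℂ)) := by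
    intro n
    have : ∀ m, (∑ l, (E l n * (starRingEnd ℂ) (E l m))) = if n = m then (∏ i, (q i : ℂ)) else 0 :=
      fun m => sum_E q n m
    rw [Finset.sum_congr rfl fun m _ => by rw [this m]]
    simp only [mul_ite, mul_zero, Finset.sum_ite_eq, Finset.mem_univ, if_true]
  rw [Finset.sum_congr rfl fun n _ => inner n]
  rw [← Finset.sum_mul, hc]
  field_simp


/-- For real-valued Floquet isospectral potentials,
`Σ_{l∈W} |V̂(l)|² = Σ_{l∈W} |Ŷ(l)|²`. -/
theorem stmt9 {d : ℕ} (hd : 1 ≤ d) (q : Fin d → ℕ) [∀ i, NeZero (q i)]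
    (V Y : (∀ i, ZMod (q i)) → ℝ)
    (hiso : FloquetIso q (fun n => (V n : ℂ)) (fun n => (Y n : ℂ))) :
    ∑ l : ∀ i, ZMod (q i), Complex.normSq (dft q (fun m => (V m : ℂ)) l)
      = ∑ l : ∀ i, ZMod (q i), Complex.normSq (dft q (fun m => (Y m : ℂ)) l) := by
  classical
  have h0 := hiso (fun _ => 0)
  simp only [Complex.ofReal_zero, mul_zero, Complex.exp_zero] at h0
  have hA := floquetMat_isHermitian q V
  have hB := floquetMat_isHermitian q Y
  set Vc : (∀ i, ZMod (q i)) → ℂ := fun n => ((V n : ℝ) : ℂ) with hVc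
  set Yc : (∀ i, ZMod (q i)) → ℂ := fun n => ((Y n : ℝ) : ℂ) with hYc
  have h0' : (floquetMat q Vc (fun _ => (1 : ℂ))).charpoly
      = (floquetMat q Yc (fun _ => (1 : ℂ))).charpoly := h0
  -- traces equal
  have htr : (floquetMat q Vc (fun _ => (1 : ℂ))).trace
      = (floquetMat q Yc (fun _ => (1 : ℂ))).trace := by
    rw [Matrix.trace_eq_sum_roots_charpoly, Matrix.trace_eq_sum_roots_charpoly, h0']
  have hsum : ∑ n, Vc n = ∑ n, Yc n := by
    have eV := trace_floquetMat q Vc (fun _ => (1 : ℂ))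
    have eY := trace_floquetMat q Yc (fun _ => (1 : ℂ))
    rw [eV, eY] at htr
    exact add_left_cancel htr
  -- traces of squares equal
  have htr2 : (floquetMat q Vc (fun _ => (1 : ℂ)) * floquetMat q Vc (fun _ => (1 : ℂ))).trace
      = (floquetMat q Yc (fun _ => (1 : ℂ)) * floquetMat q Yc (fun _ => (1 : ℂ))).trace :=
    herm_trace_sq_eq hA hB h0'
  have e2V := trace_sq_floquetMat q Vc (fun _ => (1 : ℂ))
  have e2Y := trace_sq_floquetMat q Yc (fun _ => (1 : ℂ))
  rw [e2V, e2Y, hsum] at htr2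
  have hsq : ∑ n, (Vc n) ^ 2 = ∑ n, (Yc n) ^ 2 := add_left_cancel htr2
  -- Parseval
  have hQ : (∏ i, (q i : ℂ)) ≠ 0 :=
    Finset.prod_ne_zero_iff.mpr fun i _ => Nat.cast_ne_zero.mpr (NeZero.ne (q i))
  have key : ∀ (F : (∀ i, ZMod (q i)) → ℝ),
      ((∑ l : ∀ i, ZMod (q i), Complex.normSq (dft q (fun m => ((F m : ℝ) : ℂ)) l) : ℝ) : ℂ)
        = (1 / ∏ i, (q i : ℂ)) * ∑ n, ((F n : ℝ) : ℂ) ^ 2 := by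
    intro F
    have h1 : ((∑ l : ∀ i, ZMod (q i), Complex.normSq (dft q (fun m => ((F m : ℝ) : ℂ)) l) : ℝ) : ℂ)
        = ∑ l : ∀ i, ZMod (q i), dft q (fun m => ((F m : ℝ) : ℂ)) l
            * (starRingEnd ℂ) (dft q (fun m => ((F m : ℝ) : ℂ)) l) := by
      push_cast
      exact Finset.sum_congr rfl fun l _ => (Complex.mul_conj _).symm
    rw [h1, parseval]
    have hterm : ∀ n, ((F n : ℝ) : ℂ) * (starRingEnd ℂ) ((F n : ℝ) : ℂ) = ((F n : ℝ) : ℂ) ^ 2 :=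
      fun n => by rw [Complex.conj_ofReal, pow_two]
    rw [Finset.sum_congr rfl fun n _ => hterm n]
  have hfinal : ((∑ l : ∀ i, ZMod (q i), Complex.normSq (dft q (fun m => (V m : ℂ)) l) : ℝ) : ℂ)
      = ((∑ l : ∀ i, ZMod (q i), Complex.normSq (dft q (fun m => (Y m : ℂ)) l) : ℝ) : ℂ) := by
    rw [key V, key Y]
    exact congrArg (fun s => (1 / ∏ i, (q i : ℂ)) * s) hsq
  exact_mod_cast hfinal


end DPSO
end
end
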